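/- arXiv:1712.05244 — 5 statements merged into one kernel-verified Lean document; each statement's English description precedes it below -/
import Mathlib

section
/- Let K ≥ 1, μ ∈ (0,1), δ ∈ (0,1). Define b_m = C(K-1,m) μ^m (1-μ)^{K-1-m} for m = 0,...,K-1, and define u > -1 by Σ_{m=0}^{K-1} b_m/(1+m) = 1/(1+u). Then Σ_{m=0}^{K-1} b_m / (K(1-δ) + (1+m)δ) ≤ 1 / (K(1-δ) + (1+u)δ). -/
/-- Tangent-line inequality for the concave function `t ↦ t/(c t + d)`. -/
lemma tangent_ineq (c d t t0 : ℝ) (hc : 0 < c) (hd : 0 < d) (ht : 0 < t) (ht0 : 0 < t0) :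
    t / (c * t + d) ≤ t0 / (c * t0 + d) + d / (c * t0 + d) ^ 2 * (t - t0) := by
  have h1 : 0 < c * t + d := by positivity
  have h2 : 0 < c * t0 + d := by positivity
  have hpoly : t * (c * t0 + d) ^ 2 ≤ (t0 * (c * t0 + d) + d * (t - t0)) * (c * t + d) := by
    nlinarith [sq_nonneg (t - t0), mul_pos hc hd]
  calc t / (c * t + d) ≤ (t0 * (c * t0 + d) + d * (t - t0)) / (c * t0 + d) ^ 2 :=
        (div_le_div_iff₀ h1 (pow_pos h2 2)).mpr hpoly
    _ = t0 / (c * t0 + d) + d / (c * t0 + d) ^ 2 * (t - t0) := by field_simp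

theorem stmt_5 (K : ℕ) (hK : 1 ≤ K) (μ δ : ℝ) (hμ0 : 0 < μ) (hμ1 : μ < 1)
    (hδ0 : 0 < δ) (hδ1 : δ < 1) (u : ℝ) (hu : -1 < u)
    (hudef : ∑ m ∈ Finset.range K,
        ((Nat.choose (K - 1) m : ℝ) * μ ^ m * (1 - μ) ^ (K - 1 - m)) / (1 + m)
      = 1 / (1 + u)) :
    ∑ m ∈ Finset.range K,
        ((Nat.choose (K - 1) m : ℝ) * μ ^ m * (1 - μ) ^ (K - 1 - m)) /
          ((K : ℝ) * (1 - δ) + (1 + m) * δ)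
      ≤ 1 / ((K : ℝ) * (1 - δ) + (1 + u) * δ) := by
  set n := K - 1 with hn
  set b : ℕ → ℝ := fun m => (Nat.choose n m : ℝ) * μ ^ m * (1 - μ) ^ (n - m) with hbdef
  have hb : ∀ m, 0 ≤ b m := by
    intro m
    have : (0:ℝ) < 1 - μ := by linarith
    positivity
  have hKn : K = n + 1 := (Nat.succ_pred_eq_of_pos hK).symm
  have hS1 : ∑ m ∈ Finset.range K, b m = 1 := by
    have h := add_pow μ (1 - μ) n
    simp only [add_sub_cancel, one_pow] at h
    rw [hKn, ← h.symm]
    · exact Finset.sum_congr rfl (fun m _ => by ring)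
  set c : ℝ := (K : ℝ) * (1 - δ) with hc
  have hc0 : 0 < c := by
    have : (1:ℝ) ≤ (K:ℝ) := by exact_mod_cast hK
    have : (0:ℝ) < 1 - δ := by linarith
    positivity
  have hu1 : 0 < 1 + u := by linarith
  set t0 : ℝ := 1 / (1 + u) with ht0def
  have ht0 : 0 < t0 := by positivity
  have h2 : 0 < c * t0 + δ := by positivity
  set A : ℝ := t0 / (c * t0 + δ) with hA
  set E : ℝ := δ / (c * t0 + δ) ^ 2 with hE
  have key : ∀ m ∈ Finset.range K,
      b m / (c + (1 + (m:ℝ)) * δ) ≤ b m * A + E * (b m / (1 + (m:ℝ)) - b m * t0) := by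
    intro m _
    have h1m : (0:ℝ) < 1 + (m:ℝ) := by positivity
    set t : ℝ := 1 / (1 + (m:ℝ)) with htdef
    have ht : 0 < t := by positivity
    have hden : 0 < c + (1 + (m:ℝ)) * δ := by positivity
    have hx : t / (c * t + δ) = 1 / (c + (1 + (m:ℝ)) * δ) := by
      rw [htdef]
      rw [div_eq_div_iff (by positivity) hden.ne']
      field_simp
    have e1 : b m / (c + (1 + (m:ℝ)) * δ) = b m * (t / (c * t + δ)) := by
      rw [hx, mul_one_div]
    have e2 : b m / (1 + (m:ℝ)) = b m * t := by rw [htdef]; ring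
    rw [e1, e2]
    have := mul_le_mul_of_nonneg_left (tangent_ineq c δ t t0 hc0 hδ0 ht ht0) (hb m)
    calc b m * (t / (c * t + δ)) ≤ b m * (t0 / (c * t0 + δ) + δ / (c * t0 + δ) ^ 2 * (t - t0)) :=
          this
      _ = b m * A + E * (b m * t - b m * t0) := by rw [hA, hE]; ring
  have hsum := Finset.sum_le_sum key
  have hrhs : ∑ m ∈ Finset.range K, (b m * A + E * (b m / (1 + (m:ℝ)) - b m * t0))
      = (∑ m ∈ Finset.range K, b m) * A
        + E * ((∑ m ∈ Finset.range K, b m / (1 + (m:ℝ)))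
            - (∑ m ∈ Finset.range K, b m) * t0) := by
    rw [Finset.sum_add_distrib, ← Finset.sum_mul, ← Finset.mul_sum, Finset.sum_sub_distrib,
      ← Finset.sum_mul]
  have hudef' : ∑ m ∈ Finset.range K, b m / (1 + (m:ℝ)) = t0 := hudef
  rw [hrhs, hS1, hudef', one_mul, one_mul, sub_self, mul_zero, add_zero] at hsum
  have hfin : A = 1 / ((K : ℝ) * (1 - δ) + (1 + u) * δ) := by
    rw [hA, ht0def, ← hc]
    have hden : 0 < c + (1 + u) * δ := by positivity
    field_simp
  calc ∑ m ∈ Finset.range K,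
        ((Nat.choose (K - 1) m : ℝ) * μ ^ m * (1 - μ) ^ (K - 1 - m)) /
          ((K : ℝ) * (1 - δ) + (1 + m) * δ)
      = ∑ m ∈ Finset.range K, b m / (c + (1 + (m:ℝ)) * δ) := rfl
    _ ≤ A := hsum
    _ = 1 / ((K : ℝ) * (1 - δ) + (1 + u) * δ) := hfin
end

section
/- Let K ≥ 1, N ≥ K be integers, M ∈ [0,N] with μ = M/N, δ ∈ [0,1], and s ∈ {1,...,K}. If Kμ is an integer, K ≥ s(1+Kμ), and T_C(μ,1) ≤ 12·T_s^{lb}(μ,1), then T_C(μ,δ) ≤ 12·T_s^{lb}(μ,δ) for all δ ∈ [0,1], where T_C(μ,δ) = K(1-μ)/(K(1-δ)+(1+Kμ)δ) and T_s^{lb}(μ,δ) = max(0, (s/(1+(s-1)(1-δ)))·(1 - M/⌊N/s⌋)). -/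
set_option maxHeartbeats 1600000 in
theorem stmt_10 (K N M s : ℕ) (hK : 1 ≤ K) (hs1 : 1 ≤ s) (hsK : s ≤ K)
    (hNK : K ≤ N) (hMN : M ≤ N) (μ : ℝ) (hμ : μ = (M : ℝ) / N)
    (hint : ∃ m : ℕ, (K : ℝ) * μ = m)
    (hKs : (s : ℝ) * (1 + (K : ℝ) * μ) ≤ K)
    (hM : M < N / s)
    (h1 : (K : ℝ) * (1 - μ) / ((K : ℝ) * (1 - 1) + (1 + (K : ℝ) * μ) * 1)
      ≤ 12 * max 0 (((s : ℝ) / (1 + ((s : ℝ) - 1) * (1 - 1))) * (1 - (M : ℝ) / (N / s : ℕ)))) :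
    ∀ δ : ℝ, 0 ≤ δ → δ ≤ 1 →
      (K : ℝ) * (1 - μ) / ((K : ℝ) * (1 - δ) + (1 + (K : ℝ) * μ) * δ)
        ≤ 12 * max 0 (((s : ℝ) / (1 + ((s : ℝ) - 1) * (1 - δ))) * (1 - (M : ℝ) / (N / s : ℕ))) := by
  intro δ hδ0 hδ1
  have hsR : (1:ℝ) ≤ s := by exact_mod_cast hs1
  have hKR : (1:ℝ) ≤ K := by exact_mod_cast hK
  have hNpos : (0:ℝ) < N := by
    have : 1 ≤ N := le_trans hK hNK
    exact_mod_cast Nat.lt_of_lt_of_le Nat.zero_lt_one this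
  have hμ0 : 0 ≤ μ := by rw [hμ]; positivity
  have hQpos : (0:ℝ) < ((N / s : ℕ) : ℝ) := by
    have : 0 < N / s := Nat.lt_of_le_of_lt (Nat.zero_le M) hM
    exact_mod_cast this
  have hQ : (M : ℝ) < ((N / s : ℕ) : ℝ) := by exact_mod_cast hM
  have hA : 0 < 1 - (M : ℝ) / ((N / s : ℕ) : ℝ) := by
    rw [sub_pos, div_lt_one hQpos]; exact hQ
  obtain ⟨A, hAdef⟩ : ∃ A : ℝ, A = 1 - (M : ℝ) / ((N / s : ℕ) : ℝ) := ⟨_, rfl⟩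
  rw [← hAdef] at hA h1 ⊢
  have hD1 : 0 < 1 + ((s:ℝ) - 1) * (1 - δ) := by nlinarith
  have hKμ : 0 ≤ (K:ℝ) * μ := by positivity
  have hD2 : 0 < (K:ℝ) * (1 - δ) + (1 + (K:ℝ) * μ) * δ := by nlinarith
  have h1' : (K:ℝ) * (1 - μ) ≤ 12 * ((s:ℝ) * A) * (1 + (K:ℝ) * μ) := by
    have hd : (0:ℝ) < 1 + (K:ℝ) * μ := by nlinarith
    have hmax : max 0 (((s:ℝ) / (1 + ((s:ℝ) - 1) * (1 - 1))) * A) = (s:ℝ) * A := by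
      rw [show (1:ℝ) + ((s:ℝ) - 1) * (1 - 1) = 1 by ring, div_one]
      exact max_eq_right (by positivity)
    rw [hmax] at h1
    have := (div_le_iff₀ hd).mp (by simpa using h1)
    linarith
  have hmono : (1 + (K:ℝ) * μ) * (1 + ((s:ℝ) - 1) * (1 - δ))
      ≤ (K:ℝ) * (1 - δ) + (1 + (K:ℝ) * μ) * δ := by nlinarith
  have hmaxg : max 0 (((s:ℝ) / (1 + ((s:ℝ) - 1) * (1 - δ))) * A)
      = ((s:ℝ) / (1 + ((s:ℝ) - 1) * (1 - δ))) * A := by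
    rw [max_eq_right]; positivity
  rw [hmaxg, div_le_iff₀ hD2]
  have hsA : 0 ≤ (s:ℝ) * A := by positivity
  have key : (K:ℝ) * (1 - μ) * (1 + ((s:ℝ) - 1) * (1 - δ))
      ≤ 12 * ((s:ℝ) * A) * ((K:ℝ) * (1 - δ) + (1 + (K:ℝ) * μ) * δ) := by
    calc (K:ℝ) * (1 - μ) * (1 + ((s:ℝ) - 1) * (1 - δ))
        ≤ 12 * ((s:ℝ) * A) * (1 + (K:ℝ) * μ) * (1 + ((s:ℝ) - 1) * (1 - δ)) := by
          apply mul_le_mul_of_nonneg_right h1' (le_of_lt hD1)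
      _ ≤ 12 * ((s:ℝ) * A) * ((K:ℝ) * (1 - δ) + (1 + (K:ℝ) * μ) * δ) := by
          nlinarith [mul_le_mul_of_nonneg_left hmono (show (0:ℝ) ≤ 12 * ((s:ℝ) * A) by positivity)]
  have hrw : 12 * ((s:ℝ) / (1 + ((s:ℝ) - 1) * (1 - δ)) * A)
      * ((K:ℝ) * (1 - δ) + (1 + (K:ℝ) * μ) * δ)
      = 12 * ((s:ℝ) * A) * ((K:ℝ) * (1 - δ) + (1 + (K:ℝ) * μ) * δ)
        / (1 + ((s:ℝ) - 1) * (1 - δ)) := by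
    field_simp
  rw [hrw, le_div_iff₀ hD1]
  linarith [key]
end

section
/- For every integer K ≥ 1, real μ ∈ (0,1), and real δ ∈ [0,1], the decentralized delivery time T_D(μ,δ) = K·Σ_{m=0}^{K-1} [C(K-1,m) μ^m (1-μ)^{K-m}] / [K(1-δ) + (1+m)δ] satisfies T_D(μ,δ) ≤ K(1-μ)/(K(1-δ) + (1+u)δ), where u ≥ 0 is defined by 1+u = Kμ/(1-(1-μ)^K). -/
set_option maxHeartbeats 1600000 in
theorem stmt_12 (K : ℕ) (hK : 1 ≤ K) (μ δ : ℝ) (hμ0 : 0 < μ) (hμ1 : μ < 1)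
    (hδ0 : 0 ≤ δ) (hδ1 : δ ≤ 1) (u : ℝ) (hu0 : 0 ≤ u)
    (hu : 1 + u = (K : ℝ) * μ / (1 - (1 - μ) ^ K)) :
    (K : ℝ) * ∑ m ∈ Finset.range K,
        ((Nat.choose (K - 1) m : ℝ) * μ ^ m * (1 - μ) ^ (K - m)) /
          ((K : ℝ) * (1 - δ) + (1 + m) * δ)
      ≤ (K : ℝ) * (1 - μ) / ((K : ℝ) * (1 - δ) + (1 + u) * δ) := by
  have hK1 : (1:ℝ) ≤ K := by exact_mod_cast hK
  have hpow : (1 - μ) ^ K < 1 := pow_lt_one₀ (by linarith) (by linarith) (by omega)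
  have hpow0 : (0:ℝ) < (1 - μ) ^ K := pow_pos (by linarith) K
  have hden : (0:ℝ) < 1 - (1 - μ) ^ K := by linarith
  have hKμ : (0:ℝ) < (K:ℝ) * μ := mul_pos (by linarith) hμ0
  obtain ⟨a, ha_def⟩ : ∃ a : ℝ, a = (K:ℝ) * (1 - δ) := ⟨_, rfl⟩
  obtain ⟨b, hb_def⟩ : ∃ b : ℝ, b = δ := ⟨_, rfl⟩
  simp only [← ha_def]
  simp only [← hb_def]
  have ha : 0 ≤ a := by rw [ha_def]; exact mul_nonneg (by linarith) (by linarith)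
  have hb : 0 ≤ b := by rw [hb_def]; exact hδ0
  obtain ⟨t0, ht0_def⟩ : ∃ t0 : ℝ, t0 = (1 - (1 - μ) ^ K) / ((K:ℝ) * μ) := ⟨_, rfl⟩
  have ht0 : 0 < t0 := by rw [ht0_def]; exact div_pos hden hKμ
  have hut0 : (1 + u) * t0 = 1 := by
    rw [ht0_def, hu]
    field_simp
  obtain ⟨X, hX_def⟩ : ∃ X : ℝ, X = a + (1 + u) * b := ⟨_, rfl⟩
  simp only [← hX_def]
  have hX : 1 ≤ X := by
    rw [hX_def, ha_def, hb_def]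
    nlinarith [mul_nonneg hu0 hδ0, mul_nonneg (sub_nonneg.2 hK1) (sub_nonneg.2 hδ1)]
  have hXpos : (0:ℝ) < X := by linarith
  have hCX : a * t0 + b = t0 * X := by
    have h : t0 * X = a * t0 + ((1 + u) * t0) * b := by rw [hX_def]; ring
    rw [h, hut0, one_mul]
  have hC : 0 < a * t0 + b := by rw [hCX]; exact mul_pos ht0 hXpos
  -- per-term tangent line inequality
  have step : ∀ m ∈ Finset.range K,
      ((Nat.choose (K - 1) m : ℝ) * μ ^ m * (1 - μ) ^ (K - m)) / (a + (1 + m) * b)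
        ≤ ((Nat.choose (K - 1) m : ℝ) * μ ^ m * (1 - μ) ^ (K - m))
            * (t0 / (a * t0 + b) - t0 * (b / (a * t0 + b) ^ 2))
          + (((Nat.choose (K - 1) m : ℝ) * μ ^ m * (1 - μ) ^ (K - m)) / (1 + m))
            * (b / (a * t0 + b) ^ 2) := by
    intro m hm
    have hw : 0 ≤ (Nat.choose (K - 1) m : ℝ) * μ ^ m * (1 - μ) ^ (K - m) :=
      mul_nonneg (mul_nonneg (Nat.cast_nonneg _) (by positivity)) (pow_nonneg (by linarith) _)
    have hm0 : (0:ℝ) ≤ m := Nat.cast_nonneg m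
    have hm1 : (0:ℝ) < 1 + m := by linarith
    have hD : 0 < a + (1 + (m:ℝ)) * b := by
      rw [ha_def, hb_def]
      nlinarith [mul_nonneg (sub_nonneg.2 hK1) (sub_nonneg.2 hδ1), mul_nonneg hm0 hδ0]
    obtain ⟨t, ht_def⟩ : ∃ t : ℝ, t = (1 + (m:ℝ))⁻¹ := ⟨_, rfl⟩
    have ht : 0 < t := by rw [ht_def]; exact inv_pos.mpr hm1
    have hmt : (1 + (m:ℝ)) * t = 1 := by rw [ht_def]; exact mul_inv_cancel₀ (ne_of_gt hm1)
    have htD : (a + (1 + (m:ℝ)) * b) * t = a * t + b := by linear_combination b * hmt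
    have hAt : 0 < a * t + b := by rw [← htD]; exact mul_pos hD ht
    have key : t * (a * t0 + b) ^ 2 ≤ (a * t + b) * (t0 * (a * t0 + b) + b * (t - t0)) := by
      nlinarith [mul_nonneg (mul_nonneg ha hb) (sq_nonneg (t - t0))]
    have core : 1 / (a + (1 + (m:ℝ)) * b)
        ≤ (t0 / (a * t0 + b) - t0 * (b / (a * t0 + b) ^ 2))
          + (1 / (1 + (m:ℝ))) * (b / (a * t0 + b) ^ 2) := by
      have h1 : 1 / (a + (1 + (m:ℝ)) * b) = t / (a * t + b) := by
        rw [← htD, mul_comm (a + (1 + (m:ℝ)) * b) t, ← div_div, div_self ht.ne']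
      have hRHS : (t0 / (a * t0 + b) - t0 * (b / (a * t0 + b) ^ 2))
          + (1 / (1 + (m:ℝ))) * (b / (a * t0 + b) ^ 2)
          = (t0 * (a * t0 + b) + b * (t - t0)) / (a * t0 + b) ^ 2 := by
        rw [show (1:ℝ) / (1 + (m:ℝ)) = t by rw [ht_def, one_div]]
        field_simp
        ring
      rw [h1, hRHS, div_le_div_iff₀ hAt (pow_pos hC 2)]
      exact key.trans_eq (mul_comm _ _)
    calc ((Nat.choose (K - 1) m : ℝ) * μ ^ m * (1 - μ) ^ (K - m)) / (a + (1 + m) * b)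
        = ((Nat.choose (K - 1) m : ℝ) * μ ^ m * (1 - μ) ^ (K - m))
            * (1 / (a + (1 + (m:ℝ)) * b)) := by rw [mul_one_div]
      _ ≤ ((Nat.choose (K - 1) m : ℝ) * μ ^ m * (1 - μ) ^ (K - m))
            * ((t0 / (a * t0 + b) - t0 * (b / (a * t0 + b) ^ 2))
              + (1 / (1 + (m:ℝ))) * (b / (a * t0 + b) ^ 2)) :=
          mul_le_mul_of_nonneg_left core hw
      _ = _ := by ring
  -- sum of weights
  have S1 : ∑ m ∈ Finset.range K, (Nat.choose (K - 1) m : ℝ) * μ ^ m * (1 - μ) ^ (K - m)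
      = 1 - μ := by
    have hKK : K - 1 + 1 = K := by omega
    calc ∑ m ∈ Finset.range K, (Nat.choose (K - 1) m : ℝ) * μ ^ m * (1 - μ) ^ (K - m)
        = ∑ m ∈ Finset.range (K - 1 + 1),
            (μ ^ m * (1 - μ) ^ (K - 1 - m) * (Nat.choose (K - 1) m : ℝ)) * (1 - μ) := by
          rw [hKK]
          refine Finset.sum_congr rfl fun m hm => ?_
          have hmK : m < K := Finset.mem_range.mp hm
          have h : K - m = (K - 1 - m) + 1 := by omega
          rw [h, pow_succ]; ring
      _ = (μ + (1 - μ)) ^ (K - 1) * (1 - μ) := by rw [← Finset.sum_mul, ← add_pow]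
      _ = 1 - μ := by norm_num
  -- sum of weights over 1+m
  have S2 : ∑ m ∈ Finset.range K,
      ((Nat.choose (K - 1) m : ℝ) * μ ^ m * (1 - μ) ^ (K - m)) / (1 + m) = (1 - μ) * t0 := by
    have hshift : ∑ m ∈ Finset.range K,
        μ ^ (m + 1) * (1 - μ) ^ (K - (m + 1)) * (Nat.choose K (m + 1) : ℝ)
        = 1 - (1 - μ) ^ K := by
      have h := add_pow μ (1 - μ) K
      have h' := Finset.sum_range_succ'
        (fun j => μ ^ j * (1 - μ) ^ (K - j) * (Nat.choose K j : ℝ)) K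
      simp only [pow_zero, Nat.sub_zero, Nat.choose_zero_right, Nat.cast_one, one_mul,
        mul_one] at h'
      have h1 : (μ + (1 - μ)) ^ K = 1 := by norm_num
      rw [h1] at h
      linarith [h, h']
    have hmain : (K:ℝ) * μ * ∑ m ∈ Finset.range K,
        ((Nat.choose (K - 1) m : ℝ) * μ ^ m * (1 - μ) ^ (K - m)) / (1 + m)
        = (1 - μ) * (1 - (1 - μ) ^ K) := by
      rw [Finset.mul_sum, ← hshift, Finset.mul_sum]
      refine Finset.sum_congr rfl fun m hm => ?_
      have hmK : m < K := Finset.mem_range.mp hm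
      have hm1 : (0:ℝ) < 1 + (m:ℝ) := by positivity
      have hc : (K:ℝ) * (Nat.choose (K - 1) m : ℝ) = (Nat.choose K (m + 1) : ℝ) * (1 + m) := by
        have h := Nat.add_one_mul_choose_eq (K - 1) m
        have h2 : K - 1 + 1 = K := by omega
        rw [h2] at h
        have h3 := congrArg (Nat.cast : ℕ → ℝ) h
        push_cast at h3
        linarith
      have hp : (1 - μ) ^ (K - m) = (1 - μ) ^ (K - (m + 1)) * (1 - μ) := by
        rw [← pow_succ]; congr 1; omega
      rw [hp, ← mul_div_assoc, div_eq_iff hm1.ne']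
      linear_combination (μ * μ ^ m * (1 - μ) ^ (K - (m + 1)) * (1 - μ)) * hc
    have h4 : ∑ m ∈ Finset.range K,
        ((Nat.choose (K - 1) m : ℝ) * μ ^ m * (1 - μ) ^ (K - m)) / (1 + m)
        = (1 - μ) * (1 - (1 - μ) ^ K) / ((K:ℝ) * μ) := by
      rw [eq_div_iff hKμ.ne']
      linarith [hmain]
    rw [h4, ht0_def]
    field_simp
  have hsum := Finset.sum_le_sum step
  rw [Finset.sum_add_distrib, ← Finset.sum_mul, ← Finset.sum_mul, S1, S2] at hsum
  have hfinal : (1 - μ) * (t0 / (a * t0 + b) - t0 * (b / (a * t0 + b) ^ 2))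
      + (1 - μ) * t0 * (b / (a * t0 + b) ^ 2) = (1 - μ) / X := by
    rw [hCX]
    field_simp
    ring
  have hle : ∑ m ∈ Finset.range K,
      ((Nat.choose (K - 1) m : ℝ) * μ ^ m * (1 - μ) ^ (K - m)) / (a + (1 + m) * b)
      ≤ (1 - μ) / X := hsum.trans_eq hfinal
  calc (K : ℝ) * ∑ m ∈ Finset.range K,
        ((Nat.choose (K - 1) m : ℝ) * μ ^ m * (1 - μ) ^ (K - m)) / (a + (1 + m) * b)
      ≤ (K : ℝ) * ((1 - μ) / X) := mul_le_mul_of_nonneg_left hle (Nat.cast_nonneg K)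
    _ = (K : ℝ) * (1 - μ) / X := (mul_div_assoc _ _ _).symm
end

section
/- For every integer K ≥ 1, real μ ∈ [0,1], and real δ ∈ [0,1], the decentralized delivery time T_D(μ,δ) = K·Σ_{m=0}^{K-1} [C(K-1,m) μ^m (1-μ)^{K-m}]/[K(1-δ)+(1+m)δ] satisfies T_D(μ,δ) ≤ T_D(μ,1) = ((1-μ)/μ)(1-(1-μ)^K) ≤ min(K(1-μ), 1/μ - 1) for μ ∈ (0,1). -/
theorem stmt_14 (K : ℕ) (hK : 1 ≤ K) (μ δ : ℝ) (hμ0 : 0 < μ) (hμ1 : μ < 1)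
    (hδ0 : 0 ≤ δ) (hδ1 : δ ≤ 1) :
    (K : ℝ) * ∑ m ∈ Finset.range K,
        ((Nat.choose (K - 1) m : ℝ) * μ ^ m * (1 - μ) ^ (K - m)) /
          ((K : ℝ) * (1 - δ) + (1 + m) * δ)
      ≤ ((1 - μ) / μ) * (1 - (1 - μ) ^ K) ∧
    (K : ℝ) * ∑ m ∈ Finset.range K,
        ((Nat.choose (K - 1) m : ℝ) * μ ^ m * (1 - μ) ^ (K - m)) /
          ((K : ℝ) * (1 - 1) + (1 + m) * 1)
      = ((1 - μ) / μ) * (1 - (1 - μ) ^ K) ∧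
    ((1 - μ) / μ) * (1 - (1 - μ) ^ K) ≤ min ((K : ℝ) * (1 - μ)) (1 / μ - 1) := by
  have hμ1' : (0:ℝ) < 1 - μ := by linarith
  have key : (K : ℝ) * ∑ m ∈ Finset.range K,
        ((Nat.choose (K - 1) m : ℝ) * μ ^ m * (1 - μ) ^ (K - m)) /
          ((K : ℝ) * (1 - 1) + (1 + m) * 1)
      = ((1 - μ) / μ) * (1 - (1 - μ) ^ K) := by
    have hbin : ∑ m ∈ Finset.range K,
        μ ^ (m+1) * (1-μ) ^ (K-(m+1)) * (Nat.choose K (m+1) : ℝ)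
        = 1 - (1-μ) ^ K := by
      have h := add_pow μ (1-μ) K
      rw [Finset.sum_range_succ'] at h
      simp at h
      linarith [h]
    rw [Finset.mul_sum]
    rw [show ((1-μ)/μ) * (1-(1-μ)^K)
        = ∑ m ∈ Finset.range K, ((1-μ)/μ) *
          (μ ^ (m+1) * (1-μ) ^ (K-(m+1)) * (Nat.choose K (m+1) : ℝ)) from by
      rw [← Finset.mul_sum, hbin]]
    apply Finset.sum_congr rfl
    intro m hm
    have hmK : m < K := Finset.mem_range.mp hm
    have hKm : K - m = (K - (m+1)) + 1 := by omega
    have hc : (K : ℝ) * (Nat.choose (K-1) m : ℝ) = (Nat.choose K (m+1) : ℝ) * (m+1) := by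
      have h := Nat.add_one_mul_choose_eq (K-1) m
      have hKK : K - 1 + 1 = K := by omega
      rw [hKK] at h
      exact_mod_cast h
    rw [hKm, pow_succ]
    have hd : (K:ℝ)*(1-1) + (1+m)*1 = (m:ℝ)+1 := by ring
    rw [hd]
    have hm1 : ((m:ℝ)+1) ≠ 0 := by positivity
    have hμne : μ ≠ 0 := hμ0.ne'
    rw [div_mul_eq_mul_div, mul_div_assoc', div_eq_div_iff hm1 hμne]
    linear_combination (μ ^ (m+1) * (1-μ) ^ (K-(m+1)) * (1-μ)) * hc
  have ineq : (K : ℝ) * ∑ m ∈ Finset.range K,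
        ((Nat.choose (K - 1) m : ℝ) * μ ^ m * (1 - μ) ^ (K - m)) /
          ((K : ℝ) * (1 - δ) + (1 + m) * δ)
      ≤ (K : ℝ) * ∑ m ∈ Finset.range K,
        ((Nat.choose (K - 1) m : ℝ) * μ ^ m * (1 - μ) ^ (K - m)) /
          ((K : ℝ) * (1 - 1) + (1 + m) * 1) := by
    apply mul_le_mul_of_nonneg_left _ (by positivity)
    apply Finset.sum_le_sum
    intro m hm
    have hmK : m < K := Finset.mem_range.mp hm
    have hmK' : (m:ℝ) + 1 ≤ K := by exact_mod_cast hmK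
    apply div_le_div_of_nonneg_left
    · positivity
    · nlinarith
    · nlinarith
  refine ⟨by linarith [ineq, key.le, key.ge], key, ?_⟩
  apply le_min
  · have hb : 1 - (K:ℝ)*μ ≤ (1-μ)^K := by
      have h := one_add_mul_le_pow (by linarith : (-2:ℝ) ≤ -μ) K
      have : (1 + -μ) = 1 - μ := by ring
      rw [this] at h
      linarith
    rw [div_mul_eq_mul_div, div_le_iff₀ hμ0]
    nlinarith
  · have h2 : ((1-μ)/μ) * (1-(1-μ)^K) ≤ ((1-μ)/μ) * 1 := by
      apply mul_le_mul_of_nonneg_left _ (by positivity)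
      nlinarith [pow_nonneg hμ1'.le K]
    have h3 : ((1-μ)/μ) * 1 = 1/μ - 1 := by field_simp
    linarith
end

section
/- For K ≥ 13 an integer (so that s = ⌊0.275K⌋ ≥ 3) and any integers N ≥ K, 0 ≤ M ≤ N with M/N ≤ 1.1/K, the cut-set bound at s = ⌊0.275K⌋ and δ = 1 satisfies (s)(1 - M/⌊N/s⌋) ≥ K/12. -/
theorem stmt_17 (K N M s : ℕ) (hK : 13 ≤ K) (hs : s = 275 * K / 1000)
    (hNK : K ≤ N) (hMN : M ≤ N) (hμ : (M : ℝ) / N ≤ 1.1 / K) :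
    (K : ℝ) / 12 ≤ (s : ℝ) * (1 - (M : ℝ) / ((N / s : ℕ) : ℝ)) := by
  -- nat facts
  have hs3 : 3 ≤ s := by omega
  have hsK : s ≤ K := by omega
  have hsN : s ≤ N := le_trans hsK hNK
  set q : ℕ := N / s with hq
  have hq1 : 1 ≤ q := (Nat.one_le_div_iff (by omega)).mpr hsN
  have hql : N + 1 ≤ (q + 1) * s :=
    Nat.succ_le_of_lt ((Nat.div_lt_iff_lt_mul (by omega)).mp (Nat.lt_succ_self q))
  have hsl : 275 * K + 1 ≤ (s + 1) * 1000 := by omega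
  have hsu : s * 1000 ≤ 275 * K := by omega
  -- real versions
  have a13 : (13:ℝ) ≤ K := by exact_mod_cast hK
  have apos : (0:ℝ) < K := by linarith
  have hnK : (K:ℝ) ≤ N := by exact_mod_cast hNK
  have npos : (0:ℝ) < N := by linarith
  have m0 : (0:ℝ) ≤ M := Nat.cast_nonneg M
  have tR3 : (3:ℝ) ≤ s := by exact_mod_cast hs3
  have tpos : (0:ℝ) < s := by linarith
  have qR1 : (1:ℝ) ≤ q := by exact_mod_cast hq1
  have qpos : (0:ℝ) < q := by linarith
  have A1 : (s:ℝ) * 1000 ≤ 275 * K := by exact_mod_cast hsu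
  have A2 : 275 * (K:ℝ) + 1 ≤ ((s:ℝ) + 1) * 1000 := by exact_mod_cast hsl
  have A4 : (N:ℝ) + 1 ≤ ((q:ℝ) + 1) * s := by exact_mod_cast hql
  have A4' : (N:ℝ) + 1 - s ≤ (q:ℝ) * s := by
    have : ((q:ℝ) + 1) * s = (q:ℝ) * s + s := by ring
    linarith
  have A5 : (M:ℝ) * K ≤ 1.1 * N := by
    have := (div_le_div_iff₀ npos apos).mp hμ
    linarith
  have htK : (s:ℝ) ≤ (275/1000) * K := by linarith
  have htN : (s:ℝ) ≤ N := by linarith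
  -- s - K/12 ≥ 1
  have hta : (K:ℝ)/12 + 1 ≤ s := by linarith
  -- main polynomial inequality
  have hP : 1.1 * (s:ℝ) * s * N ≤ ((s:ℝ) - K/12) * K * ((N:ℝ) + 1 - s) := by
    nlinarith [mul_nonneg (sub_nonneg.mpr hta) (sub_nonneg.mpr hnK),
      mul_nonneg (sub_nonneg.mpr A1) (sub_nonneg.mpr hnK),
      mul_nonneg (sub_nonneg.mpr hta) (sub_nonneg.mpr htN),
      mul_nonneg (sub_nonneg.mpr A1) npos.le,
      mul_nonneg (sub_nonneg.mpr hta) apos.le,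
      mul_pos apos npos, mul_pos tpos npos]
  have hnn : (0:ℝ) ≤ ((s:ℝ) - K/12) * K := mul_nonneg (by linarith) apos.le
  have h4' : ((s:ℝ) - K/12) * K * ((N:ℝ) + 1 - s) ≤ ((s:ℝ) - K/12) * K * ((q:ℝ) * s) :=
    mul_le_mul_of_nonneg_left A4' hnn
  have h5' : (M:ℝ) * K * ((s:ℝ) * s) ≤ 1.1 * N * ((s:ℝ) * s) :=
    mul_le_mul_of_nonneg_right A5 (mul_nonneg tpos.le tpos.le)
  have key : (s:ℝ) * M ≤ ((s:ℝ) - K/12) * q := by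
    have hts : (0:ℝ) < (K:ℝ) * s := mul_pos apos tpos
    have e1 : ((s:ℝ) - K/12) * q * ((K:ℝ) * s) = ((s:ℝ) - K/12) * K * ((q:ℝ) * s) := by ring
    have e2 : 1.1 * (N:ℝ) * ((s:ℝ) * s) = 1.1 * (s:ℝ) * s * N := by ring
    have e3 : (s:ℝ) * M * ((K:ℝ) * s) = (M:ℝ) * K * ((s:ℝ) * s) := by ring
    have : (s:ℝ) * M * ((K:ℝ) * s) ≤ ((s:ℝ) - K/12) * q * ((K:ℝ) * s) := by linarith
    exact le_of_mul_le_mul_right this hts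
  have hdiv : (s:ℝ) * M / q ≤ (s:ℝ) - K/12 := (div_le_iff₀ qpos).mpr key
  have hre : (s:ℝ) * (1 - (M:ℝ) / q) = (s:ℝ) - (s:ℝ) * M / q := by ring
  rw [hre]
  linarith
end
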